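/- arXiv:1303.2899 — 3 statements merged into one kernel-verified Lean document; each statement's English description precedes it below -/
import Mathlib

section
/- Let T be a symmetric bilinear form on Minkowski space V = ℝ^(1+d) such that T(k,k) > 0 for every non-vanishing null vector k. Then there exists a timelike vector k* and a real number λ such that T(k*, ·) = -λ g(k*, ·). -/
noncomputable section

/-- The Minkowski bilinear form on `ℝ^(1+d)`, written as `ℝ × (Fin d → ℝ)`. -/
def mink (d : ℕ) (x y : ℝ × (Fin d → ℝ)) : ℝ :=
  -(x.1 * y.1) + ∑ i, x.2 i * y.2 i

/-- If `0 ≤ α t + β t²` for all `t` near `0`, then `α = 0`. -/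
private lemma alpha_zero (α β : ℝ) (h : ∀ᶠ t in nhds (0:ℝ), 0 ≤ α * t + β * t^2) :
    α = 0 := by
  have hd : HasDerivAt (fun t : ℝ => α * t + β * t^2) α 0 := by
    have h1 : HasDerivAt (fun t : ℝ => α * t) α 0 := by
      simpa using (hasDerivAt_id (0:ℝ)).const_mul α
    have h2 : HasDerivAt (fun t : ℝ => β * t^2) 0 0 := by
      simpa using (hasDerivAt_pow 2 (0:ℝ)).const_mul β
    have h3 := h1.add h2
    rw [add_zero] at h3
    exact h3
  have hmin : IsLocalMin (fun t : ℝ => α * t + β * t^2) 0 := by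
    filter_upwards [h] with t ht
    simpa using ht
  exact hmin.hasDerivAt_eq_zero hd

/-- If a symmetric bilinear form `T` on Minkowski space satisfies `T(k,k) > 0` for every
non-vanishing null vector `k`, then there is a timelike vector `k*` and `λ ∈ ℝ` with
`T(k*,·) = -λ g(k*,·)`. -/
theorem exists_timelike_eigenvector (d : ℕ)
    (T : (ℝ × (Fin d → ℝ)) →ₗ[ℝ] (ℝ × (Fin d → ℝ)) →ₗ[ℝ] ℝ)
    (hsymm : ∀ u v, T u v = T v u)
    (hnull : ∀ k, k ≠ 0 → mink d k k = 0 → 0 < T k k) :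
    ∃ (k : ℝ × (Fin d → ℝ)) (lam : ℝ), mink d k k < 0 ∧
      ∀ v, T k v = -(lam * mink d k v) := by
  classical
  -- notation
  set Q : (Fin d → ℝ) → ℝ := fun x => T (1, x) (1, x) with hQdef
  set s : (Fin d → ℝ) → ℝ := fun x => ∑ i, x i * x i with hsdef
  have hknz : ∀ x : Fin d → ℝ, ((1:ℝ), x) ≠ (0 : ℝ × (Fin d → ℝ)) := by
    intro x hx
    have := congrArg Prod.fst hx
    simp at this
  have hmkk : ∀ x : Fin d → ℝ, mink d (1, x) (1, x) = s x - 1 := by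
    intro x; simp [mink, hsdef]; ring
  -- continuity of Q and s
  have hTc : Continuous fun p : (ℝ × (Fin d → ℝ)) × (ℝ × (Fin d → ℝ)) => T p.1 p.2 := by
    have h1 : Continuous fun u : ℝ × (Fin d → ℝ) => LinearMap.toContinuousLinearMap (T u) := by
      exact LinearMap.continuous_of_finiteDimensional
        ((LinearMap.toContinuousLinearMap : ((ℝ × (Fin d → ℝ)) →ₗ[ℝ] ℝ) ≃ₗ[ℝ] ((ℝ × (Fin d → ℝ)) →L[ℝ] ℝ)).toLinearMap.comp T)
    have h2 : Continuous fun p : (ℝ × (Fin d → ℝ)) × (ℝ × (Fin d → ℝ)) =>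
        (LinearMap.toContinuousLinearMap (T p.1)) p.2 :=
      isBoundedBilinearMap_apply.continuous.comp
        ((h1.comp continuous_fst).prodMk continuous_snd)
    simpa using h2
  have hkx : Continuous fun x : Fin d → ℝ => ((1:ℝ), x) := by
    exact continuous_const.prodMk continuous_id
  have hQc : Continuous Q := by
    have := hTc.comp (hkx.prodMk hkx)
    exact this
  have hsc : Continuous s := by
    apply continuous_finset_sum
    intro i _
    exact (continuous_apply i).mul (continuous_apply i)
  -- the compact set A
  set c0 : ℝ := Q 0 with hc0def
  set H : (Fin d → ℝ) → ℝ := fun x => Q x - c0 * (1 - s x) with hHdef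
  set A : Set (Fin d → ℝ) := {x | s x ≤ 1 ∧ H x ≤ 0} with hAdef
  have hA_slt : ∀ x ∈ A, s x < 1 := by
    intro x hx
    rcases lt_or_eq_of_le hx.1 with h | h
    · exact h
    · exfalso
      have hnullx : mink d ((1:ℝ), x) (1, x) = 0 := by rw [hmkk, h]; ring
      have hpos := hnull _ (hknz x) hnullx
      have : H x = Q x := by simp [hHdef, h]
      have := hx.2
      rw [‹H x = Q x›] at this
      exact absurd hpos (not_lt.2 this)
  have hA_closed : IsClosed A := by
    have h1 : IsClosed {x : Fin d → ℝ | s x ≤ 1} := isClosed_le hsc continuous_const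
    have h2 : IsClosed {x : Fin d → ℝ | H x ≤ 0} :=
      isClosed_le (hQc.sub (continuous_const.mul (continuous_const.sub hsc))) continuous_const
    exact h1.inter h2
  have hA_sub : A ⊆ Metric.closedBall 0 1 := by
    intro x hx
    rw [Metric.mem_closedBall, dist_zero_right]
    rw [pi_norm_le_iff_of_nonneg zero_le_one]
    intro i
    have hterm : x i * x i ≤ s x := by
      apply Finset.single_le_sum (f := fun j => x j * x j)
        (fun j _ => mul_self_nonneg (x j)) (Finset.mem_univ i)
    have : x i * x i ≤ 1 := le_trans hterm hx.1
    simpa [Real.norm_eq_abs] using abs_le_one_iff_mul_self_le_one.2 this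
  have hA_cpt : IsCompact A :=
    (isCompact_closedBall (0 : Fin d → ℝ) 1).of_isClosed_subset hA_closed hA_sub
  have hs0 : s 0 = 0 := by simp [hsdef]
  have h0A : (0 : Fin d → ℝ) ∈ A := by
    constructor
    · rw [hs0]; norm_num
    · show H 0 ≤ 0
      rw [hHdef]
      simp only [hs0, hc0def]
      ring_nf
      exact le_refl _
  have hA_ne : A.Nonempty := ⟨0, h0A⟩
  -- the function f and its minimizer
  set f : (Fin d → ℝ) → ℝ := fun x => Q x / (1 - s x) with hfdef
  have hf_cont : ContinuousOn f A := by
    apply ContinuousOn.div hQc.continuousOn (by fun_prop)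
    intro x hx
    have := hA_slt x hx
    intro h0
    linarith [(by linarith : (0:ℝ) < 1 - s x)]
  obtain ⟨x₀, hx₀A, hx₀min⟩ := hA_cpt.exists_isMinOn hA_ne hf_cont
  have hs₀ : s x₀ < 1 := hA_slt x₀ hx₀A
  have hD : (0:ℝ) < 1 - s x₀ := by linarith
  have hf0 : f x₀ ≤ c0 := by
    have h1 := hx₀min h0A
    have h2 : f 0 = c0 := by rw [hfdef]; simp only [hs0, hc0def]; norm_num
    calc f x₀ ≤ f 0 := h1
      _ = c0 := h2
  -- global minimality on the open ball
  have hglob : ∀ y : Fin d → ℝ, s y < 1 → f x₀ ≤ f y := by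
    intro y hy
    rcases le_or_gt (H y) 0 with h | h
    · exact hx₀min ⟨le_of_lt hy, h⟩
    · have hDy : (0:ℝ) < 1 - s y := by linarith
      have : c0 < f y := by
        rw [hfdef]
        rw [lt_div_iff₀ hDy]
        simp only [hHdef] at h
        linarith
      linarith
  -- expansions
  have hQexp : ∀ (x h : Fin d → ℝ) (t : ℝ),
      Q (x + t • h) = Q x + 2 * t * T (1, x) ((0:ℝ), h) + t^2 * T ((0:ℝ), h) ((0:ℝ), h) := by
    intro x h t
    have hk : ((1:ℝ), x + t • h) = ((1:ℝ), x) + t • (((0:ℝ), h) : ℝ × (Fin d → ℝ)) := by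
      refine Prod.ext ?_ ?_ <;> simp
    rw [hQdef]
    simp only [hk, map_add, map_smul, LinearMap.add_apply, LinearMap.smul_apply, smul_eq_mul]
    rw [hsymm ((0:ℝ), h) ((1:ℝ), x)]
    ring
  have hsexp : ∀ (x h : Fin d → ℝ) (t : ℝ),
      s (x + t • h) = s x + 2 * t * (∑ i, x i * h i) + t^2 * ∑ i, h i * h i := by
    intro x h t
    rw [hsdef]
    simp only [Pi.add_apply, Pi.smul_apply, smul_eq_mul]
    rw [show ∑ i, (x i + t * h i) * (x i + t * h i)
        = ∑ i, (x i * x i + 2 * t * (x i * h i) + t^2 * (h i * h i)) from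
      Finset.sum_congr rfl (fun i _ => by ring)]
    rw [Finset.sum_add_distrib, Finset.sum_add_distrib, ← Finset.mul_sum, ← Finset.mul_sum]
  -- first-order condition
  have hkey : ∀ h : Fin d → ℝ,
      (1 - s x₀) * T (1, x₀) ((0:ℝ), h) + Q x₀ * (∑ i, x₀ i * h i) = 0 := by
    intro h
    set α : ℝ := 2 * ((1 - s x₀) * T (1, x₀) ((0:ℝ), h) + Q x₀ * (∑ i, x₀ i * h i)) with hαdef
    set β : ℝ := (1 - s x₀) * T ((0:ℝ), h) ((0:ℝ), h) + Q x₀ * (∑ i, h i * h i) with hβdef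
    have hev : ∀ᶠ t in nhds (0:ℝ), 0 ≤ α * t + β * t^2 := by
      have hcont : ContinuousAt (fun t : ℝ => s (x₀ + t • h)) 0 :=
        (hsc.comp (by fun_prop : Continuous fun t : ℝ => x₀ + t • h)).continuousAt
      have hlt : ∀ᶠ t in nhds (0:ℝ), s (x₀ + t • h) < 1 := by
        have : (fun t : ℝ => s (x₀ + t • h)) 0 < 1 := by simpa using hs₀
        exact hcont.eventually_lt continuousAt_const this
      filter_upwards [hlt] with t ht
      have hDy : (0:ℝ) < 1 - s (x₀ + t • h) := by linarith
      have hle := hglob (x₀ + t • h) ht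
      rw [hfdef] at hle
      rw [div_le_div_iff₀ hD hDy] at hle
      have hexp : Q (x₀ + t • h) * (1 - s x₀) - Q x₀ * (1 - s (x₀ + t • h))
          = α * t + β * t^2 := by
        rw [hQexp x₀ h t, hsexp x₀ h t, hαdef, hβdef]
        ring
      linarith
    have := alpha_zero α β hev
    rw [hαdef] at this
    linarith
  -- conclusion
  set μ : ℝ := Q x₀ / (s x₀ - 1) with hμdef
  have hsne : s x₀ - 1 ≠ 0 := by linarith
  have hQμ : Q x₀ = μ * (s x₀ - 1) := by
    rw [hμdef]; field_simp
  have hspat : ∀ h : Fin d → ℝ, T (1, x₀) ((0:ℝ), h) = μ * ∑ i, x₀ i * h i := by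
    intro h
    have := hkey h
    have h1 : (1 - s x₀) * T (1, x₀) ((0:ℝ), h) = -Q x₀ * (∑ i, x₀ i * h i) := by linarith
    rw [hQμ] at h1
    have h2 : (1 - s x₀) * T (1, x₀) ((0:ℝ), h) = (1 - s x₀) * (μ * ∑ i, x₀ i * h i) := by
      rw [h1]; ring
    exact mul_left_cancel₀ (by linarith) h2
  refine ⟨((1:ℝ), x₀), -μ, ?_, ?_⟩
  · rw [hmkk]; linarith
  · intro v
    obtain ⟨v0, w⟩ := v
    have hdec : ((v0, w) : ℝ × (Fin d → ℝ)) = v0 • ((1:ℝ), x₀) + (((0:ℝ), w - v0 • x₀) : ℝ × (Fin d → ℝ)) := by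
      refine Prod.ext ?_ ?_ <;> simp
    have hsum : ∑ i, x₀ i * (w - v0 • x₀) i
        = (∑ i, x₀ i * w i) - v0 * s x₀ := by
      rw [hsdef]
      rw [show ∑ i, x₀ i * (w - v0 • x₀) i
          = ∑ i, (x₀ i * w i - v0 * (x₀ i * x₀ i)) from
        Finset.sum_congr rfl (fun i _ => by simp [Pi.sub_apply]; ring)]
      rw [Finset.sum_sub_distrib, ← Finset.mul_sum]
    have hTv : T (1, x₀) ((v0, w) : ℝ × (Fin d → ℝ))
        = μ * (-v0 + ∑ i, x₀ i * w i) := by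
      rw [hdec, map_add, map_smul, smul_eq_mul]
      rw [hspat (w - v0 • x₀), hsum]
      have hQx : T (1, x₀) ((1:ℝ), x₀) = Q x₀ := rfl
      rw [hQx, hQμ]
      ring
    rw [hTv]
    simp only [mink]
    ring
end
end

section
/- Let T be a symmetric bilinear form on Minkowski space V = ℝ^(1+d) such that T(k,k) > 0 for every non-vanishing null vector k and T(k,k) ≥ 0 for all vectors k. Then any timelike eigenvector k* (i.e., satisfying T(k*,·) = -λ g(k*,·) for some λ ∈ ℝ) is unique up to scalar multiplication. -/
noncomputable section

lemma mink_comm (d : ℕ) (x y : ℝ × (Fin d → ℝ)) : mink d x y = mink d y x := by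
  simp [mink, mul_comm]

lemma mink_expand (d : ℕ) (x y : ℝ × (Fin d → ℝ)) (t : ℝ) :
    mink d (x + t • y) (x + t • y)
      = mink d x x + 2 * t * mink d x y + t ^ 2 * mink d y y := by
  have h : ∀ i, ((x + t • y).2 i) * ((x + t • y).2 i)
      = x.2 i * x.2 i + (2 * t) * (x.2 i * y.2 i) + t ^ 2 * (y.2 i * y.2 i) := by
    intro i
    simp [Prod.snd_add, Pi.add_apply, Pi.smul_apply, smul_eq_mul]
    ring
  have hsum : ∑ i, ((x + t • y).2 i) * ((x + t • y).2 i)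
      = ∑ i, (x.2 i * x.2 i + (2 * t) * (x.2 i * y.2 i) + t ^ 2 * (y.2 i * y.2 i)) :=
    Finset.sum_congr rfl (fun i _ => h i)
  simp only [mink, hsum, Finset.sum_add_distrib, ← Finset.mul_sum,
    Prod.fst_add, Prod.smul_fst, smul_eq_mul]
  ring

lemma mink_self_nonneg_of_fst_zero (d : ℕ) (w : ℝ × (Fin d → ℝ)) (hw : w.1 = 0) :
    0 ≤ mink d w w := by
  simp only [mink, hw, mul_zero, zero_mul, neg_zero, zero_add]
  exact Finset.sum_nonneg fun i _ => mul_self_nonneg _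

/-- If a symmetric bilinear form `T` on Minkowski space satisfies `T(k,k) > 0` for every
non-vanishing null vector `k` and `T(k,k) ≥ 0` for all `k`, then any timelike eigenvector
(`T(k,·) = -λ g(k,·)`) is unique up to scalar multiplication. -/
theorem timelike_eigenvector_unique (d : ℕ)
    (T : (ℝ × (Fin d → ℝ)) →ₗ[ℝ] (ℝ × (Fin d → ℝ)) →ₗ[ℝ] ℝ)
    (hsymm : ∀ u v, T u v = T v u)
    (hnull : ∀ k, k ≠ 0 → mink d k k = 0 → 0 < T k k)
    (hpos : ∀ k, 0 ≤ T k k)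
    (k₁ k₂ : ℝ × (Fin d → ℝ)) (lam₁ lam₂ : ℝ)
    (ht₁ : mink d k₁ k₁ < 0) (ht₂ : mink d k₂ k₂ < 0)
    (he₁ : ∀ v, T k₁ v = -(lam₁ * mink d k₁ v))
    (he₂ : ∀ v, T k₂ v = -(lam₂ * mink d k₂ v)) :
    ∃ c : ℝ, k₂ = c • k₁ := by
  set g11 := mink d k₁ k₁ with hg11
  set g22 := mink d k₂ k₂ with hg22
  set g12 := mink d k₂ k₁ with hg12
  -- k₁.1 ≠ 0
  have hsum1 : 0 ≤ ∑ i, k₁.2 i * k₁.2 i := Finset.sum_nonneg fun i _ => mul_self_nonneg _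
  have hk11 : k₁.1 ≠ 0 := by
    intro h
    rw [hg11] at ht₁
    simp only [mink, h, mul_zero, zero_mul, neg_zero, zero_add] at ht₁
    linarith
  set c : ℝ := k₂.1 / k₁.1 with hc
  set w := k₂ + (-c) • k₁ with hw
  have hw1 : w.1 = 0 := by
    simp [hw, hc, Prod.fst_add, Prod.smul_fst, smul_eq_mul]
    field_simp
    ring
  have hww0 : 0 ≤ mink d w w := mink_self_nonneg_of_fst_zero d w hw1
  have hwwe : mink d w w = g22 + 2 * (-c) * g12 + (-c) ^ 2 * g11 := mink_expand d k₂ k₁ (-c)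
  -- discriminant is nonnegative
  have hkey : 0 ≤ g22 - 2 * c * g12 + c ^ 2 * g11 := by
    rw [hwwe] at hww0; linarith [hww0]
  have hD : 0 ≤ g12 ^ 2 - g11 * g22 := by
    nlinarith [sq_nonneg (g11 * c - g12), mul_nonneg (neg_nonneg.2 ht₁.le) hkey]
  -- symmetry relation
  have hlg : (lam₂ - lam₁) * g12 = 0 := by
    have h1 := he₁ k₂
    have h2 := he₂ k₁
    have h3 := hsymm k₁ k₂
    rw [h1, h2] at h3
    rw [mink_comm d k₁ k₂] at h3
    rw [hg12]; nlinarith [h3]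
  by_cases hz : g12 = 0
  · exfalso
    rw [hz] at hD
    nlinarith
  · have hlam : lam₂ = lam₁ := by
      rcases mul_eq_zero.1 hlg with h | h
      · linarith
      · exact absurd h hz
    set D := g12 ^ 2 - g11 * g22 with hDdef
    have hs : Real.sqrt D ^ 2 = D := Real.sq_sqrt hD
    set t₀ : ℝ := (-g12 - Real.sqrt D) / g11 with ht₀
    have hg11ne : g11 ≠ 0 := ne_of_lt ht₁
    set n := k₂ + t₀ • k₁ with hn
    have hnn : mink d n n = 0 := by
      rw [hn, mink_expand d k₂ k₁ t₀]
      rw [ht₀]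
      field_simp
      nlinarith [hs]
    by_cases hn0 : n = 0
    · refine ⟨-t₀, ?_⟩
      have : k₂ = -(t₀ • k₁) := by
        rw [← zero_sub, ← hn0, hn]; abel
      rw [this, neg_smul]
    · exfalso
      have hTnn := hnull n hn0 hnn
      have hTe : T n n = 0 := by
        rw [hn]
        simp only [map_add, map_smul, LinearMap.add_apply, LinearMap.smul_apply, smul_eq_mul]
        rw [he₁ k₂, he₁ k₁, he₂ k₂, he₂ k₁, hlam]
        rw [mink_comm d k₁ k₂]
        have h0 : g22 + 2 * t₀ * g12 + t₀ ^ 2 * g11 = 0 := by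
          have := hnn
          rw [hn, mink_expand d k₂ k₁ t₀, ← hg22, ← hg12, ← hg11] at this
          linarith
        rw [← hg11, ← hg22, ← hg12]
        linear_combination (-lam₁) * h0
      linarith
end
end

section
/- Let f: ℝ^d → ℝ be a nonnegative, continuous, compactly supported function, not identically zero, and m > 0. Define γ(p) = √(1 + |p|²/m²), ε = ∫ mγ(p) f(p) dp, ρ = m ∫ f(p) dp, and P = (1/d)∫ m (|p|²/(m²γ(p))) f(p) dp. Then ρ² ≤ ε(ε - dP), i.e., ε ≥ (d/2)P + √((dP/2)² + ρ²). -/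
noncomputable section
open MeasureTheory

/-- Lorentz factor `γ(p) = √(1 + |p|²/m²)` on momentum space `ℝ^d`. -/
def gam (d : ℕ) (m : ℝ) (p : Fin d → ℝ) : ℝ :=
  Real.sqrt (1 + (∑ i, p i ^ 2) / m ^ 2)

/-- Energy density `ε = ∫ mγ(p) f(p) dp`. -/
def eps (d : ℕ) (m : ℝ) (f : (Fin d → ℝ) → ℝ) : ℝ :=
  ∫ p, m * gam d m p * f p

/-- Rest mass density `ρ = m ∫ f(p) dp`. -/
def rho (d : ℕ) (m : ℝ) (f : (Fin d → ℝ) → ℝ) : ℝ :=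
  m * ∫ p, f p

/-- Mean kinetic pressure `P = (1/d) ∫ m (|p|²/(m²γ(p))) f(p) dp`. -/
def prs (d : ℕ) (m : ℝ) (f : (Fin d → ℝ) → ℝ) : ℝ :=
  (1 / (d : ℝ)) * ∫ p, m * ((∑ i, p i ^ 2) / (m ^ 2 * gam d m p)) * f p

/-- For a nonnegative continuous compactly supported distribution function `f ≠ 0`,
the energy density, rest mass density and mean kinetic pressure satisfy
`ρ² ≤ ε(ε - dP)`, i.e. `ε ≥ (d/2)P + √((dP/2)² + ρ²)`. -/
theorem energy_density_lower_bound (d : ℕ) (hd : 0 < d) (m : ℝ) (hm : 0 < m)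
    (f : (Fin d → ℝ) → ℝ) (hcont : Continuous f) (hsupp : HasCompactSupport f)
    (hnonneg : ∀ p, 0 ≤ f p) (hne : ∃ p, f p ≠ 0) :
    rho d m f ^ 2 ≤ eps d m f * (eps d m f - d * prs d m f) ∧
    ((d : ℝ) / 2) * prs d m f +
        Real.sqrt (((d : ℝ) * prs d m f / 2) ^ 2 + rho d m f ^ 2) ≤ eps d m f := by
  classical
  obtain ⟨p₀, hp₀⟩ := hne
  set S : (Fin d → ℝ) → ℝ := fun p => ∑ i, p i ^ 2 with hSdef
  have hScont : Continuous S := by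
    apply continuous_finset_sum
    intro i _
    exact (continuous_apply i).pow 2
  have hSnn : ∀ p, 0 ≤ S p := fun p => Finset.sum_nonneg fun i _ => sq_nonneg _
  have hbase : ∀ p, (0:ℝ) < 1 + S p / m ^ 2 := fun p => by positivity
  have hγpos : ∀ p, 0 < gam d m p := fun p => Real.sqrt_pos.2 (hbase p)
  have hγsq : ∀ p, gam d m p ^ 2 = 1 + S p / m ^ 2 := fun p => Real.sq_sqrt (hbase p).le
  have hγcont : Continuous (gam d m) :=
    Real.continuous_sqrt.comp (continuous_const.add (hScont.div_const _))
  have hint : ∀ g : (Fin d → ℝ) → ℝ, Continuous g →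
      Integrable (fun p => g p * f p) := fun g hg =>
    (hg.mul hcont).integrable_of_hasCompactSupport hsupp.mul_left
  -- the three basic integrands
  set A : ℝ := eps d m f with hA
  set B : ℝ := rho d m f with hB
  have hintA : Integrable (fun p => m * gam d m p * f p) :=
    hint _ (continuous_const.mul hγcont)
  have hintC : Integrable (fun p => m / gam d m p * f p) :=
    hint _ (continuous_const.div hγcont (fun p => (hγpos p).ne'))
  have hintP : Integrable (fun p => m * (S p / (m ^ 2 * gam d m p)) * f p) :=
    hint _ (continuous_const.mul (hScont.div
      (continuous_const.mul hγcont) (fun p => (mul_pos (pow_pos hm 2) (hγpos p)).ne')))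
  have hdC : A - (d : ℝ) * prs d m f = ∫ p, m / gam d m p * f p := by
    have hd' : (d : ℝ) ≠ 0 := Nat.cast_ne_zero.2 hd.ne'
    have : (d : ℝ) * prs d m f = ∫ p, m * (S p / (m ^ 2 * gam d m p)) * f p := by
      rw [prs]; field_simp; rfl
    rw [hA, eps, this, ← integral_sub hintA hintP]
    congr 1
    ext p
    have h1 := (hγpos p).ne'
    have h2 := hγsq p
    have hSm : S p = (gam d m p ^ 2 - 1) * m ^ 2 := by
      rw [h2]; field_simp; ring
    rw [hSm]
    field_simp
    ring
  set C : ℝ := A - (d : ℝ) * prs d m f with hC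
  -- quadratic nonnegativity and Cauchy–Schwarz
  have hquad : ∀ t : ℝ, 0 ≤ A * (t * t) + (2 * B) * t + C := by
    intro t
    have hrw : A * (t * t) + (2 * B) * t + C =
        ∫ p, (t * t * (m * gam d m p) + 2 * t * m + m / gam d m p) * f p := by
      have e1 : ∀ p, (t * t * (m * gam d m p) + 2 * t * m + m / gam d m p) * f p
          = t * t * (m * gam d m p * f p) + (2 * t * (m * f p)
            + m / gam d m p * f p) := by intro p; ring
      simp only [e1]
      have int1 : Integrable (fun p => t * t * (m * gam d m p * f p)) volume :=
        hintA.const_mul _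
      have int2 : Integrable (fun p => 2 * t * (m * f p)) volume :=
        (hint _ continuous_const).const_mul _
      have int23 : Integrable (fun p => 2 * t * (m * f p) + m / gam d m p * f p) volume :=
        int2.add hintC
      rw [integral_add int1 int23, integral_add int2 hintC,
        integral_const_mul, integral_const_mul, hdC, hA, eps, hB, rho,
        integral_const_mul]
      ring
    rw [hrw]
    apply integral_nonneg
    intro p
    have h1 := hγpos p
    have h2 := hnonneg p
    have key : 0 ≤ t * t * (m * gam d m p) + 2 * t * m + m / gam d m p := by
      have : t * t * (m * gam d m p) + 2 * t * m + m / gam d m p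
          = m / gam d m p * (t * gam d m p + 1) ^ 2 := by field_simp; ring
      rw [this]; positivity
    exact mul_nonneg key h2
  have hdisc := discrim_le_zero hquad
  rw [discrim] at hdisc
  have hCS : B ^ 2 ≤ A * C := by nlinarith [hdisc]
  refine ⟨hCS, ?_⟩
  -- positivity facts
  have hBpos : 0 < B := by
    rw [hB, rho]
    exact mul_pos hm (hcont.integral_pos_of_hasCompactSupport_nonneg_nonzero hsupp hnonneg hp₀)
  have hAnn : 0 ≤ A := by
    rw [hA, eps]
    exact integral_nonneg fun p =>
      mul_nonneg (mul_nonneg hm.le (hγpos p).le) (hnonneg p)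
  have hACpos : 0 < A * C := lt_of_lt_of_le (pow_pos hBpos 2) hCS
  have hApos : 0 < A := by
    rcases hAnn.lt_or_eq with h | h
    · exact h
    · rw [← h, zero_mul] at hACpos; exact absurd hACpos (lt_irrefl 0)
  have hCpos : 0 < C := by nlinarith [hACpos, hApos]
  -- second form
  have hdP : (d : ℝ) * prs d m f = A - C := by rw [hC]; ring
  have hhalf : ((d : ℝ) / 2) * prs d m f = (A - C) / 2 := by
    rw [div_mul_eq_mul_div, hdP]
  rw [hhalf, hdP]
  have hsq : ((A - C) / 2) ^ 2 + B ^ 2 ≤ ((A + C) / 2) ^ 2 := by nlinarith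
  have : Real.sqrt (((A - C) / 2) ^ 2 + B ^ 2) ≤ (A + C) / 2 := by
    rw [show ((A - C)/2)^2 + B^2 = ((A-C)/2)^2 + B^2 from rfl]
    calc Real.sqrt (((A - C) / 2) ^ 2 + B ^ 2) ≤ Real.sqrt (((A + C) / 2) ^ 2) :=
          Real.sqrt_le_sqrt hsq
      _ = (A + C) / 2 := Real.sqrt_sq (by positivity)
  linarith
end
end
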